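/- Let r ≥ 2 and let n₁ ≥ n₂ ≥ … ≥ n_r ≥ 1 with n = n₁ + n₂ + … + n_r, and let α be the number of indices i with n_i odd. If 3·α > n, then the isometric path number of the complete r-partite graph K_{n₁,n₂,…,n_r} equals ⌈(n+α)/4⌉. -/

import Mathlib

open SimpleGraph

/-- A walk is an *isometric path* if it is a path whose length equals the
distance in `G` between its two endpoints (i.e. a shortest path). -/
def SimpleGraph.Walk.IsIsometricPath {V : Type*} {G : SimpleGraph V} {u v : V}
    (p : G.Walk u v) : Prop :=
  p.IsPath ∧ p.length = G.dist u v

/-- The *isometric path number* of `G`: the minimum number of isometric paths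
needed to cover all vertices of `G`. -/
noncomputable def isometricPathNumber {V : Type*} (G : SimpleGraph V) : ℕ :=
  sInf {k | ∃ (u v : Fin k → V) (p : ∀ i, G.Walk (u i) (v i)),
    (∀ i, (p i).IsIsometricPath) ∧ ∀ w : V, ∃ i, w ∈ (p i).support}


def pairUp {β : Type*} : List β → List (β × Option β)
  | [] => []
  | [a] => [(a, none)]
  | a :: b :: rest => (a, some b) :: pairUp rest

lemma pairUp_length {β : Type*} : ∀ l : List β, (pairUp l).length = (l.length + 1) / 2
  | [] => by simp [pairUp]
  | [a] => by simp [pairUp]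
  | a :: b :: rest => by
    simp only [pairUp, List.length_cons, pairUp_length rest]
    omega

lemma pairUp_mem {β : Type*} : ∀ l : List β, ∀ pr ∈ pairUp l,
    pr.1 ∈ l ∧ ∀ b, pr.2 = some b → b ∈ l
  | [], pr, hpr => by simp [pairUp] at hpr
  | [a], pr, hpr => by
    simp [pairUp] at hpr
    subst hpr
    simp
  | a :: b :: rest, pr, hpr => by
    simp only [pairUp, List.mem_cons] at hpr
    rcases hpr with rfl | hpr
    · refine ⟨by simp, ?_⟩
      rintro c hc
      simp only [Option.some.injEq] at hc
      simp [← hc]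
    · obtain ⟨h1, h2⟩ := pairUp_mem rest pr hpr
      exact ⟨by simp [h1], fun c hc => by simp [h2 c hc]⟩

lemma pairUp_ne {β : Type*} : ∀ l : List β, l.Nodup → ∀ pr ∈ pairUp l,
    ∀ b, pr.2 = some b → pr.1 ≠ b
  | [], _, pr, hpr => by simp [pairUp] at hpr
  | [a], _, pr, hpr => by
    simp [pairUp] at hpr
    subst hpr
    simp
  | a :: b :: rest, hnd, pr, hpr => by
    simp only [pairUp, List.mem_cons] at hpr
    rcases hpr with rfl | hpr
    · rintro c hc
      simp only [Option.some.injEq] at hc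
      subst hc
      intro hac
      simp only [List.nodup_cons, List.mem_cons] at hnd
      exact hnd.1 (Or.inl hac)
    · have hnd' : rest.Nodup := by
        simp only [List.nodup_cons] at hnd
        exact hnd.2.2
      exact pairUp_ne rest hnd' pr hpr

lemma pairUp_cover {β : Type*} : ∀ l : List β, ∀ x ∈ l,
    ∃ pr ∈ pairUp l, pr.1 = x ∨ pr.2 = some x
  | [], x, hx => by simp at hx
  | [a], x, hx => by
    simp at hx
    subst hx
    exact ⟨(x, none), by simp [pairUp]⟩
  | a :: b :: rest, x, hx => by
    simp only [List.mem_cons] at hx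
    rcases hx with rfl | rfl | hx
    · exact ⟨(x, some b), by simp [pairUp]⟩
    · exact ⟨(a, some x), by simp [pairUp]⟩
    · obtain ⟨pr, h1, h2⟩ := pairUp_cover rest x hx
      exact ⟨pr, by simp [pairUp, h1], h2⟩


section CMP
variable {r : ℕ} {n : Fin r → ℕ}

abbrev KG (n : Fin r → ℕ) : SimpleGraph ((i : Fin r) × Fin (n i)) :=
  completeMultipartiteGraph (fun i => Fin (n i))

lemma adj_iff' {u v : (i : Fin r) × Fin (n i)} : (KG n).Adj u v ↔ u.1 ≠ v.1 := by
  simp [completeMultipartiteGraph]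

lemma dist_le_two' (hr : 2 ≤ r) (hpos : ∀ i, 1 ≤ n i) (u v : (i : Fin r) × Fin (n i)) :
    (KG n).dist u v ≤ 2 := by
  by_cases huv : u = v
  · simp [huv, SimpleGraph.dist_self]
  by_cases h1 : u.1 = v.1
  · obtain ⟨j, hj⟩ : ∃ j : Fin r, j ≠ u.1 := by
      have : Nontrivial (Fin r) := Fin.nontrivial_iff_two_le.mpr hr
      exact exists_ne u.1
    have w : (i : Fin r) × Fin (n i) := ⟨j, ⟨0, hpos j⟩⟩
    have h1' : (KG n).Adj u ⟨j, ⟨0, hpos j⟩⟩ := adj_iff'.mpr (by simpa using hj.symm)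
    have h2' : (KG n).Adj ⟨j, ⟨0, hpos j⟩⟩ v := adj_iff'.mpr (by simp [h1 ▸ hj])
    simpa using SimpleGraph.dist_le (Walk.cons h1' (Walk.cons h2' Walk.nil))
  · have : (KG n).Adj u v := adj_iff'.mpr h1
    have := SimpleGraph.dist_le (Walk.cons this Walk.nil)
    simp at this; omega

lemma fst_eq_of_dist_two' {u v : (i : Fin r) × Fin (n i)} (h : (KG n).dist u v = 2) :
    u.1 = v.1 := by
  by_contra hne
  have : (KG n).dist u v = 1 := SimpleGraph.dist_eq_one_iff_adj.mpr (adj_iff'.mpr hne)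
  omega

lemma dist_eq_two' (hr : 2 ≤ r) (hpos : ∀ i, 1 ≤ n i) {u v : (i : Fin r) × Fin (n i)}
    (hne : u ≠ v) (h1 : u.1 = v.1) : (KG n).dist u v = 2 := by
  have hle := dist_le_two' hr hpos u v
  have h0 : (KG n).dist u v ≠ 0 := by
    intro h0
    rcases (SimpleGraph.dist_eq_zero_iff_eq_or_not_reachable.mp h0) with h | h
    · exact hne h
    · obtain ⟨j, hj⟩ : ∃ j : Fin r, j ≠ u.1 := by
        have : Nontrivial (Fin r) := Fin.nontrivial_iff_two_le.mpr hr
        exact exists_ne u.1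
      have h1' : (KG n).Adj u ⟨j, ⟨0, hpos j⟩⟩ := adj_iff'.mpr (by simpa using hj.symm)
      have h2' : (KG n).Adj ⟨j, ⟨0, hpos j⟩⟩ v := adj_iff'.mpr (by simp [h1 ▸ hj])
      exact h ⟨.cons h1' (.cons h2' .nil)⟩
  have hne1 : (KG n).dist u v ≠ 1 := by
    intro h1'
    exact (adj_iff'.mp (SimpleGraph.dist_eq_one_iff_adj.mp h1')) h1
  omega


lemma dist_eq_one' {u v : (i : Fin r) × Fin (n i)} (h1 : u.1 ≠ v.1) :
    (KG n).dist u v = 1 := SimpleGraph.dist_eq_one_iff_adj.mpr (adj_iff'.mpr h1)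

lemma sig_ne₂ {i : Fin r} {x y : Fin (n i)} (h : (x : ℕ) ≠ (y : ℕ)) :
    (⟨i, x⟩ : (i : Fin r) × Fin (n i)) ≠ ⟨i, y⟩ := by
  intro he
  apply h
  have h2 := (Sigma.mk.inj_iff.mp he).2
  exact congrArg Fin.val (eq_of_heq h2)

def lastV (n : Fin r → ℕ) (hpos : ∀ i, 1 ≤ n i) (j : Fin r) : (i : Fin r) × Fin (n i) :=
  ⟨j, ⟨n j - 1, by have := hpos j; omega⟩⟩

/-- Path of length 2 : ⟨i,2q⟩ — lastV j — ⟨i,2q+1⟩, for j ≠ i. -/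
def dblPath (n : Fin r → ℕ) (hpos : ∀ i, 1 ≤ n i) (i j : Fin r) (hij : j ≠ i)
    (q : ℕ) (hq : q < n i / 2) :
    (u : (i : Fin r) × Fin (n i)) × (v : (i : Fin r) × Fin (n i)) × (KG n).Walk u v :=
  ⟨⟨i, ⟨2*q, by omega⟩⟩, ⟨i, ⟨2*q+1, by omega⟩⟩, by
    have h1 : (KG n).Adj ⟨i, ⟨2*q, by omega⟩⟩ (lastV n hpos j) := adj_iff'.mpr (Ne.symm hij)
    have h2 : (KG n).Adj (lastV n hpos j) ⟨i, ⟨2*q+1, by omega⟩⟩ := adj_iff'.mpr hij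
    exact Walk.cons h1 (Walk.cons h2 Walk.nil)⟩

lemma dblPath_support (hpos : ∀ i, 1 ≤ n i) (i j : Fin r) (hij : j ≠ i)
    (q : ℕ) (hq : q < n i / 2) :
    (dblPath n hpos i j hij q hq).2.2.support
      = [⟨i, ⟨2*q, by omega⟩⟩, lastV n hpos j, ⟨i, ⟨2*q+1, by omega⟩⟩] := by
  simp [dblPath, Walk.support_cons]

lemma dblPath_iso (hr : 2 ≤ r) (hpos : ∀ i, 1 ≤ n i) (i j : Fin r) (hij : j ≠ i)
    (q : ℕ) (hq : q < n i / 2) :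
    (dblPath n hpos i j hij q hq).2.2.IsIsometricPath := by
  constructor
  · rw [Walk.isPath_def, dblPath_support hpos i j hij q hq]
    refine List.nodup_cons.mpr ⟨?_, List.nodup_cons.mpr ⟨?_, List.nodup_singleton _⟩⟩
    · simp only [List.mem_cons, List.mem_singleton, not_or, List.not_mem_nil]
      refine ⟨fun he => hij (congrArg Sigma.fst he).symm, sig_ne₂ (x := ⟨2*q, by omega⟩) (y := ⟨2*q+1, by omega⟩) (by show (2*q:ℕ) ≠ (2*q+1:ℕ); omega), fun h => h⟩
    · simp only [List.mem_singleton]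
      exact fun he => hij (congrArg Sigma.fst he)
  · have hlen : (dblPath n hpos i j hij q hq).2.2.length = 2 := by simp [dblPath]
    rw [hlen]
    exact (dist_eq_two' hr hpos (sig_ne₂ (x := ⟨2*q, by omega⟩) (y := ⟨2*q+1, by omega⟩) (by show (2*q:ℕ) ≠ (2*q+1:ℕ); omega)) rfl).symm

/-- Edge path between two last vertices of different parts, or a singleton. -/
def mkPair (n : Fin r → ℕ) (hpos : ∀ i, 1 ≤ n i) (a : Fin r) (ob : Option (Fin r))
    (hne : ∀ b, ob = some b → a ≠ b) :
    (u : (i : Fin r) × Fin (n i)) × (v : (i : Fin r) × Fin (n i)) × (KG n).Walk u v :=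
  match ob, hne with
  | none, _ => ⟨lastV n hpos a, lastV n hpos a, .nil⟩
  | some b, hne =>
    ⟨lastV n hpos a, lastV n hpos b, .cons (v := lastV n hpos b) (adj_iff'.mpr (hne b rfl)) .nil⟩

lemma mkPair_iso (hpos : ∀ i, 1 ≤ n i) (a : Fin r) (ob : Option (Fin r))
    (hne : ∀ b, ob = some b → a ≠ b) :
    (mkPair n hpos a ob hne).2.2.IsIsometricPath := by
  match ob, hne with
  | none, _ =>
    exact ⟨Walk.IsPath.nil, by simp [mkPair, SimpleGraph.dist_self]⟩
  | some b, hne =>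
    constructor
    · rw [Walk.isPath_def]
      have hs : (mkPair n hpos a (some b) hne).2.2.support
          = [lastV n hpos a, lastV n hpos b] := by simp [mkPair, Walk.support_cons]
      rw [hs]
      refine List.nodup_cons.mpr ⟨?_, List.nodup_singleton _⟩
      simp only [List.mem_singleton]
      exact fun he => hne b rfl (congrArg Sigma.fst he)
    · have hlen : (mkPair n hpos a (some b) hne).2.2.length = 1 := by simp [mkPair]
      rw [hlen]
      exact (dist_eq_one' (hne b rfl)).symm

lemma mkPair_support_left (hpos : ∀ i, 1 ≤ n i) (a : Fin r) (ob : Option (Fin r))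
    (hne : ∀ b, ob = some b → a ≠ b) :
    lastV n hpos a ∈ (mkPair n hpos a ob hne).2.2.support := by
  match ob, hne with
  | none, _ => simp [mkPair]
  | some b, hne => simp [mkPair]

lemma mkPair_support_right (hpos : ∀ i, 1 ≤ n i) (a b : Fin r) (ob : Option (Fin r))
    (hne : ∀ b, ob = some b → a ≠ b) (hb : ob = some b) :
    lastV n hpos b ∈ (mkPair n hpos a ob hne).2.2.support := by
  subst hb
  simp [mkPair]


lemma sumA (hr : 2 ≤ r) (a : Fin r) : (∑ j : Fin r, if j = a then (2:ℕ) else 0) = 2 := by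
  simp [Finset.sum_ite_eq']

lemma sumB (a b : Fin r) (hab : a ≠ b) :
    (∑ j : Fin r, ((if j = a then (2:ℕ) else 0) + (if j = b then 2 else 0))) = 4 := by
  rw [Finset.sum_add_distrib]
  simp [Finset.sum_ite_eq']

lemma path_sum_le_four' (hr : 2 ≤ r) (hpos : ∀ i, 1 ≤ n i)
    {u v : (i : Fin r) × Fin (n i)} (p : (KG n).Walk u v)
    (hlen : p.length ≤ 2) (hfst : p.length = 2 → u.1 = v.1) :
    (∑ j : Fin r, ((p.support.map Sigma.fst).count j
        + if Odd ((p.support.map Sigma.fst).count j) then 1 else 0)) ≤ 4 := by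
  cases p with
  | nil =>
    have : (∑ j : Fin r, (([u.1] : List (Fin r)).count j
        + if Odd (([u.1] : List (Fin r)).count j) then 1 else 0))
        = ∑ j : Fin r, if j = u.1 then (2:ℕ) else 0 := by
      apply Finset.sum_congr rfl
      intro j _
      by_cases hj : j = u.1 <;> simp [hj, List.count_cons, List.count_nil, eq_comm (a := u.1) (b := j)]
    simp only [Walk.support_nil, List.map_cons, List.map_nil]
    rw [this, sumA hr]; omega
  | cons h q =>
    cases q with
    | nil =>
      have hab : u.1 ≠ v.1 := adj_iff'.mp h
      have key : (∑ j : Fin r, (([u.1, v.1] : List (Fin r)).count j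
          + if Odd (([u.1, v.1] : List (Fin r)).count j) then 1 else 0))
          = ∑ j : Fin r, ((if j = u.1 then (2:ℕ) else 0) + (if j = v.1 then 2 else 0)) := by
        apply Finset.sum_congr rfl
        intro j _
        by_cases hj : j = u.1 <;> by_cases hj' : j = v.1 <;>
          simp [hj, hj', hab, Ne.symm hab, List.count_cons, List.count_nil, eq_comm (a := u.1) (b := j), eq_comm (a := v.1) (b := j)]
      simp only [Walk.support_cons, Walk.support_nil, List.map_cons, List.map_nil]
      rw [key, sumB u.1 v.1 hab]
    | cons h' q' =>
      cases q' with
      | nil =>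
        rename_i w
        have huv : v.1 = u.1 := (hfst (by simp)).symm
        have hab : u.1 ≠ w.1 := adj_iff'.mp h
        have key : (∑ j : Fin r, (([u.1, w.1, v.1] : List (Fin r)).count j
            + if Odd (([u.1, w.1, v.1] : List (Fin r)).count j) then 1 else 0))
            = ∑ j : Fin r, ((if j = u.1 then (2:ℕ) else 0) + (if j = w.1 then 2 else 0)) := by
          apply Finset.sum_congr rfl
          intro j _
          rw [huv]
          by_cases hj : j = u.1 <;> by_cases hj' : j = w.1 <;>
            simp [hj, hj', hab, Ne.symm hab, List.count_cons, List.count_nil, eq_comm (a := u.1) (b := j), eq_comm (a := w.1) (b := j)]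
        simp only [Walk.support_cons, Walk.support_nil, List.map_cons, List.map_nil]
        rw [key, sumB u.1 w.1 hab]
      | cons h'' q'' =>
        simp at hlen


lemma filter_card_le_count' {V : Type*} [DecidableEq V] (f : V → Fin r) (j : Fin r) :
    ∀ l : List V, (l.toFinset.filter (fun w => f w = j)).card ≤ (l.map f).count j
  | [] => by simp
  | a :: l => by
    rw [List.toFinset_cons, List.map_cons, List.count_cons]
    rw [Finset.filter_insert]
    by_cases ha : f a = j
    · simp only [ha, if_pos rfl]
      calc (insert a (l.toFinset.filter (fun w => f w = j))).card
        ≤ (l.toFinset.filter (fun w => f w = j)).card + 1 := Finset.card_insert_le _ _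
        _ ≤ (l.map f).count j + 1 := by
            have := filter_card_le_count' f j l
            omega
        _ = _ := by simp [ha]
    · simp only [ha, if_neg ha, beq_iff_eq, if_neg ha, add_zero]
      exact filter_card_le_count' f j l

lemma odd_term_of_odd_sum {k : ℕ} {f : Fin k → ℕ} (h : Odd (∑ i, f i)) :
    ∃ i, Odd (f i) := by
  by_contra hc
  push_neg at hc
  simp only [Nat.not_odd_iff_even] at hc
  exact (Nat.not_odd_iff_even.mpr (Finset.even_sum _ (fun i _ => hc i))) h

-- Step 2 arith core
lemma part_sum_lb' {k m : ℕ} (c : Fin k → ℕ) (hm : m ≤ ∑ i, c i) :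
    m + (if Odd m then 1 else 0) ≤ ∑ i, (c i + if Odd (c i) then 1 else 0) := by
  have hsum : ∑ i, (c i + if Odd (c i) then 1 else 0)
      = (∑ i, c i) + ∑ i, (if Odd (c i) then 1 else 0) := Finset.sum_add_distrib
  rcases Nat.lt_or_ge m (∑ i, c i) with hlt | hge
  · have : (if Odd m then 1 else 0) ≤ 1 := by split <;> omega
    omega
  · have heq : m = ∑ i, c i := le_antisymm hm hge
    by_cases hodd : Odd m
    · obtain ⟨i₀, hi₀⟩ := odd_term_of_odd_sum (heq ▸ hodd)
      have : (1:ℕ) ≤ ∑ i, (if Odd (c i) then 1 else 0) := by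
        have := Finset.single_le_sum (f := fun i => if Odd (c i) then (1:ℕ) else 0)
          (fun i _ => by positivity) (Finset.mem_univ i₀)
        simpa [hi₀] using this
      rw [if_pos hodd]
      omega
    · rw [if_neg hodd]
      omega


lemma card_part' (j : Fin r) :
    (Finset.univ.filter (fun w : (i : Fin r) × Fin (n i) => w.1 = j)).card = n j := by
  rw [← Fintype.card_fin (n j), ← Finset.card_univ,
    ← Finset.card_map ⟨fun x : Fin (n j) => (⟨j, x⟩ : (i : Fin r) × Fin (n i)), fun a b hab => by simpa using hab⟩]
  congr 1
  ext w
  simp only [Finset.mem_map, Finset.mem_univ, true_and, Finset.mem_filter,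
    Function.Embedding.coeFn_mk]
  constructor
  · rintro h; rcases w with ⟨i, y⟩; cases h; exact ⟨y, rfl⟩
  · rintro ⟨x, rfl⟩; rfl

lemma lower_bound (hr : 2 ≤ r) (hpos : ∀ i, 1 ≤ n i) (k : ℕ)
    (u v : Fin k → (i : Fin r) × Fin (n i)) (p : ∀ i, (KG n).Walk (u i) (v i))
    (hiso : ∀ i, (p i).IsIsometricPath) (hcov : ∀ w, ∃ i, w ∈ (p i).support) :
    (∑ j, n j) + (Finset.univ.filter fun j => Odd (n j)).card ≤ 4 * k := by
  set c : Fin k → Fin r → ℕ := fun i j => (((p i).support).map Sigma.fst).count j with hc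
  have step2 : ∀ j, n j + (if Odd (n j) then 1 else 0)
      ≤ ∑ i, (c i j + if Odd (c i j) then 1 else 0) := by
    intro j
    apply part_sum_lb'
    have hsub : Finset.univ.filter (fun w : (i : Fin r) × Fin (n i) => w.1 = j)
        ⊆ Finset.univ.biUnion (fun i => (p i).support.toFinset.filter (fun w => w.1 = j)) := by
      intro w hw
      obtain ⟨i, hi⟩ := hcov w
      refine Finset.mem_biUnion.mpr ⟨i, Finset.mem_univ _, ?_⟩
      simp only [Finset.mem_filter, List.mem_toFinset]
      exact ⟨hi, (Finset.mem_filter.mp hw).2⟩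
    calc n j = _ := (card_part' j).symm
      _ ≤ _ := Finset.card_le_card hsub
      _ ≤ ∑ i, ((p i).support.toFinset.filter (fun w => w.1 = j)).card :=
          Finset.card_biUnion_le
      _ ≤ ∑ i, c i j := Finset.sum_le_sum (fun i _ => filter_card_le_count' Sigma.fst j _)
  have step1 : ∀ i, (∑ j : Fin r, (c i j + if Odd (c i j) then 1 else 0)) ≤ 4 := by
    intro i
    have h2 := (hiso i).2
    have hle : (p i).length ≤ 2 := h2 ▸ dist_le_two' hr hpos (u i) (v i)
    exact path_sum_le_four' hr hpos (p i) hle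
      (fun hl => fst_eq_of_dist_two' (by rw [← h2, hl]))
  calc (∑ j, n j) + (Finset.univ.filter fun j => Odd (n j)).card
      = ∑ j, (n j + if Odd (n j) then 1 else 0) := by
        rw [Finset.sum_add_distrib, Finset.sum_boole]
        simp
    _ ≤ ∑ j, ∑ i, (c i j + if Odd (c i j) then 1 else 0) :=
        Finset.sum_le_sum (fun j _ => step2 j)
    _ = ∑ i, ∑ j, (c i j + if Odd (c i j) then 1 else 0) := Finset.sum_comm
    _ ≤ ∑ _i : Fin k, 4 := Finset.sum_le_sum (fun i _ => step1 i)
    _ = 4 * k := by simp [mul_comm]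


lemma sum_parts (n : Fin r → ℕ) :
    ∑ i, n i = 2 * (∑ i, n i / 2) + (Finset.univ.filter fun i => Odd (n i)).card := by
  have h1 : ∀ i : Fin r, n i = 2 * (n i / 2) + (if Odd (n i) then 1 else 0) := by
    intro i
    rcases Nat.even_or_odd (n i) with he | ho
    · rw [if_neg (by simpa using he)]
      have := Nat.even_iff.mp he
      omega
    · rw [if_pos ho]
      have := Nat.odd_iff.mp ho
      omega
  calc ∑ i, n i = ∑ i, (2 * (n i / 2) + (if Odd (n i) then 1 else 0)) :=
        Finset.sum_congr rfl (fun i _ => h1 i)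
    _ = 2 * (∑ i, n i / 2) + ∑ i, (if Odd (n i) then 1 else 0) := by
        rw [Finset.sum_add_distrib, Finset.mul_sum]
    _ = _ := by rw [Finset.sum_boole]; simp

lemma upper_bound (hr : 2 ≤ r) (hpos : ∀ i, 1 ≤ n i)
    (h : 3 * (Finset.univ.filter fun i => Odd (n i)).card > ∑ i, n i) :
    ∃ L : List ((u : (i : Fin r) × Fin (n i)) × (v : (i : Fin r) × Fin (n i)) ×
        (KG n).Walk u v),
      L.length ≤ (∑ i, n i + (Finset.univ.filter fun i => Odd (n i)).card + 3) / 4 ∧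
      (∀ x ∈ L, x.2.2.IsIsometricPath) ∧
      (∀ w : (i : Fin r) × Fin (n i), ∃ x ∈ L, w ∈ x.2.2.support) := by
  classical
  set α := (Finset.univ.filter fun i => Odd (n i)).card with hαdef
  set D := ∑ i, n i / 2 with hDdef
  have hNDα : ∑ i, n i = 2 * D + α := sum_parts n
  have hDα : D < α := by omega
  -- Hall's theorem to get injective assignment of doubles to odd parts
  have hcardι : Fintype.card ((i : Fin r) × Fin (n i / 2)) = D := by
    simp [Fintype.card_sigma, hDdef]
  obtain ⟨f, hfinj, hfmem⟩ :
      ∃ f : ((i : Fin r) × Fin (n i / 2)) → Fin r, Function.Injective f ∧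
        ∀ d, f d ∈ (Finset.univ.filter fun j => Odd (n j)).erase d.1 := by
    rw [← Finset.all_card_le_biUnion_card_iff_exists_injective]
    intro s
    rcases s.eq_empty_or_nonempty with rfl | ⟨d, hd⟩
    · simp
    · have h1 : ((Finset.univ.filter fun j => Odd (n j)).erase d.1)
          ⊆ s.biUnion (fun d => (Finset.univ.filter fun j => Odd (n j)).erase d.1) :=
        Finset.subset_biUnion_of_mem
          (fun d : (i : Fin r) × Fin (n i / 2) =>
            (Finset.univ.filter fun j => Odd (n j)).erase d.1) hd
      have h2 : α - 1 ≤ ((Finset.univ.filter fun j => Odd (n j)).erase d.1).card :=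
        Finset.pred_card_le_card_erase
      have h3 : s.card ≤ D := by
        calc s.card ≤ Finset.univ.card := Finset.card_le_univ s
          _ = D := by rw [Finset.card_univ, hcardι]
      have := Finset.card_le_card h1
      omega
  have hfodd : ∀ d, Odd (n (f d)) := fun d => (Finset.mem_filter.mp
    (Finset.mem_of_mem_erase (hfmem d))).2
  have hfne : ∀ d, f d ≠ d.1 := fun d => Finset.ne_of_mem_erase (hfmem d)
  -- the doubles paths
  set L₁ : List ((u : (i : Fin r) × Fin (n i)) × (v : (i : Fin r) × Fin (n i)) ×
      (KG n).Walk u v) :=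
    (List.finRange r).flatMap (fun i =>
      (List.finRange (n i / 2)).map (fun q =>
        dblPath n hpos i (f ⟨i, q⟩) (hfne ⟨i, q⟩) q.1 q.2)) with hL₁
  -- remaining odd parts
  set B := (Finset.univ.filter fun j => Odd (n j)) \ (Finset.univ.image f) with hB
  set Lb := B.sort (· ≤ ·) with hLb
  have hLbnd : Lb.Nodup := B.sort_nodup _
  set L₂ : List ((u : (i : Fin r) × Fin (n i)) × (v : (i : Fin r) × Fin (n i)) ×
      (KG n).Walk u v) :=
    (pairUp Lb).attach.map (fun x =>
      mkPair n hpos x.1.1 x.1.2 (pairUp_ne Lb hLbnd x.1 x.2)) with hL₂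
  refine ⟨L₁ ++ L₂, ?_, ?_, ?_⟩
  · -- length bound
    have hlen1 : L₁.length = D := by
      rw [hL₁, List.length_flatMap]
      rw [hDdef, Fin.sum_univ_def]
      congr 1
      apply List.map_congr_left
      intro i _
      simp
    have hBcard : B.card = α - D := by
      rw [hB, Finset.card_sdiff_of_subset]
      · congr 1
        rw [Finset.card_image_of_injective _ hfinj, Finset.card_univ, hcardι]
      · intro j hj
        obtain ⟨d, _, rfl⟩ := Finset.mem_image.mp hj
        simp only [Finset.mem_filter, Finset.mem_univ, true_and]
        exact hfodd d
    have hlen2 : L₂.length = (α - D + 1) / 2 := by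
      rw [hL₂, List.length_map, List.length_attach, pairUp_length, hLb,
        Finset.length_sort, hBcard]
    rw [List.length_append, hlen1, hlen2]
    omega
  · -- isometric
    intro x hx
    rcases List.mem_append.mp hx with hx | hx
    · rw [hL₁] at hx
      obtain ⟨i, _, hx⟩ := List.mem_flatMap.mp hx
      obtain ⟨q, _, rfl⟩ := List.mem_map.mp hx
      exact dblPath_iso hr hpos i _ _ q.1 q.2
    · rw [hL₂] at hx
      obtain ⟨y, _, rfl⟩ := List.mem_map.mp hx
      exact mkPair_iso hpos _ _ _
  · -- coverage
    rintro ⟨i, x⟩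
    by_cases hx : (x : ℕ) < 2 * (n i / 2)
    · -- covered by a double
      have hq : (x : ℕ) / 2 < n i / 2 := by omega
      refine ⟨dblPath n hpos i (f ⟨i, ⟨x.1/2, hq⟩⟩) (hfne ⟨i, ⟨x.1/2, hq⟩⟩) (x.1/2) hq,
        ?_, ?_⟩
      · apply List.mem_append_left
        rw [hL₁]
        exact List.mem_flatMap.mpr ⟨i, List.mem_finRange _,
          List.mem_map.mpr ⟨⟨x.1/2, hq⟩, List.mem_finRange _, rfl⟩⟩
      · rw [dblPath_support]
        rcases Nat.even_or_odd x.1 with he | ho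
        · have : (⟨i, x⟩ : (i : Fin r) × Fin (n i)) = ⟨i, ⟨2*(x.1/2), by omega⟩⟩ := by
            congr 1
            apply Fin.ext
            have := Nat.even_iff.mp he
            simp; omega
          rw [this]; simp
        · have : (⟨i, x⟩ : (i : Fin r) × Fin (n i)) = ⟨i, ⟨2*(x.1/2)+1, by omega⟩⟩ := by
            congr 1
            apply Fin.ext
            have := Nat.odd_iff.mp ho
            simp; omega
          rw [this]; simp
    · -- x is the leftover vertex of an odd part
      have hxo : Odd (n i) ∧ (x : ℕ) = n i - 1 := by
        have hxlt := x.2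
        exact ⟨Nat.odd_iff.mpr (by omega), by omega⟩
      have hveq : (⟨i, x⟩ : (i : Fin r) × Fin (n i)) = lastV n hpos i := by
        rw [lastV]
        congr 1
        exact Fin.ext hxo.2
      rw [hveq]
      by_cases him : i ∈ Finset.univ.image f
      · obtain ⟨d, _, hd⟩ := Finset.mem_image.mp him
        refine ⟨dblPath n hpos d.1 (f d) (hfne d) d.2.1 d.2.2, ?_, ?_⟩
        · apply List.mem_append_left
          rw [hL₁]
          exact List.mem_flatMap.mpr ⟨d.1, List.mem_finRange _,
            List.mem_map.mpr ⟨d.2, List.mem_finRange _, rfl⟩⟩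
        · rw [dblPath_support, hd]
          simp
      · have hiB : i ∈ B := by
          rw [hB, Finset.mem_sdiff]
          exact ⟨Finset.mem_filter.mpr ⟨Finset.mem_univ _, hxo.1⟩, him⟩
        have hiLb : i ∈ Lb := by
          rw [hLb, Finset.mem_sort]
          exact hiB
        obtain ⟨pr, hpr, hcase⟩ := pairUp_cover Lb i hiLb
        refine ⟨mkPair n hpos pr.1 pr.2 (pairUp_ne Lb hLbnd pr hpr), ?_, ?_⟩
        · apply List.mem_append_right
          rw [hL₂]
          exact List.mem_map.mpr ⟨⟨pr, hpr⟩, List.mem_attach _ _, rfl⟩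
        · rcases hcase with rfl | hcase
          · exact mkPair_support_left hpos _ _ _
          · exact mkPair_support_right hpos pr.1 i pr.2 _ hcase

end CMP

lemma mem_of_list {W : Type*} [Nonempty W] (G : SimpleGraph W) (k : ℕ)
    (L : List ((u : W) × (v : W) × G.Walk u v)) (hlen : L.length ≤ k)
    (hiso : ∀ x ∈ L, x.2.2.IsIsometricPath)
    (hcov : ∀ w : W, ∃ x ∈ L, w ∈ x.2.2.support) :
    k ∈ {k | ∃ (u v : Fin k → W) (p : ∀ i, G.Walk (u i) (v i)),
      (∀ i, (p i).IsIsometricPath) ∧ ∀ w : W, ∃ i, w ∈ (p i).support} := by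
  obtain ⟨w₀⟩ := ‹Nonempty W›
  have hnil : (Walk.nil : G.Walk w₀ w₀).IsIsometricPath :=
    ⟨Walk.IsPath.nil, by simp [SimpleGraph.dist_self]⟩
  set F : Fin k → (u : W) × (v : W) × G.Walk u v := fun i =>
    if h : (i : ℕ) < L.length then L.get ⟨i, h⟩ else ⟨w₀, w₀, .nil⟩ with hF
  refine ⟨fun i => (F i).1, fun i => (F i).2.1, fun i => (F i).2.2, ?_, ?_⟩
  · intro i
    show (F i).2.2.IsIsometricPath
    by_cases h : (i : ℕ) < L.length
    · have : F i = L.get ⟨i, h⟩ := by rw [hF]; simp [h]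
      rw [this]
      exact hiso _ (L.get_mem _)
    · have : F i = ⟨w₀, w₀, .nil⟩ := by rw [hF]; simp [h]
      rw [this]
      exact hnil
  · intro w
    obtain ⟨x, hxL, hxw⟩ := hcov w
    obtain ⟨⟨m, hm⟩, rfl⟩ := List.mem_iff_get.mp hxL
    refine ⟨⟨m, lt_of_lt_of_le hm hlen⟩, ?_⟩
    show w ∈ (F ⟨m, lt_of_lt_of_le hm hlen⟩).2.2.support
    have : F ⟨m, lt_of_lt_of_le hm hlen⟩ = L.get ⟨m, hm⟩ := by rw [hF]; simp [hm]
    rw [this]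
    exact hxw


theorem stmt_1 (r : ℕ) (hr : 2 ≤ r) (n : Fin r → ℕ) (hpos : ∀ i, 1 ≤ n i)
    (hsorted : Antitone n) (N : ℕ) (hN : N = ∑ i, n i)
    (α : ℕ) (hα : α = (Finset.univ.filter fun i => Odd (n i)).card)
    (h : 3 * α > N) :
    isometricPathNumber (completeMultipartiteGraph (fun i : Fin r => Fin (n i))) =
      (N + α + 3) / 4 := by
  subst hN hα
  have hne : Nonempty ((i : Fin r) × Fin (n i)) := ⟨⟨⟨0, by omega⟩, ⟨0, hpos _⟩⟩⟩
  obtain ⟨L, hlen, hiso, hcov⟩ := upper_bound hr hpos h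
  have hmem := mem_of_list (KG n)
    ((∑ i, n i + (Finset.univ.filter fun i => Odd (n i)).card + 3) / 4) L hlen hiso hcov
  apply le_antisymm
  · exact Nat.sInf_le hmem
  · apply le_csInf ⟨_, hmem⟩
    rintro m ⟨u, v, p, hiso', hcov'⟩
    have := lower_bound hr hpos m u v p hiso' hcov'
    omega
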